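/- arXiv:2501.16261 — 6 statements merged into one kernel-verified Lean document; each statement's English description precedes it below -/
import Mathlib

section
/- Let Ψ: ℝⁿ → ℂ be measurable with Re Ψ ≥ 0 and sup_{ξ ∈ ℝⁿ} |Ψ(ξ)| / (1 + ‖ξ‖²) < ∞, and let μ be a nonnegative Borel measure on ℝⁿ satisfying Dalang's condition ∫_{ℝⁿ} μ(dξ) / (1 + Re Ψ(ξ)) < ∞. Then the fractal indices satisfy I_l ≤ I_m ≤ I_u. -/
open MeasureTheory Complex Set

noncomputable section

/-- The upper fractal index `I_u` (with `sSup ∅ = 0` in `ℝ`). -/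
def fractalIndexU (n : ℕ) (Ψ : EuclideanSpace ℝ (Fin n) → ℂ)
    (μ : Measure (EuclideanSpace ℝ (Fin n))) : ℝ :=
  sSup {η : ℝ | η ∈ Set.Ioo (0 : ℝ) 1 ∧
    Integrable (fun ξ => ((1 + (Ψ ξ).re) ^ (1 - η))⁻¹) μ}

/-- The middle fractal index `I_m` (with `sSup ∅ = 0` in `ℝ`). -/
def fractalIndexM (n : ℕ) (Ψ : EuclideanSpace ℝ (Fin n) → ℂ)
    (μ : Measure (EuclideanSpace ℝ (Fin n))) : ℝ :=
  sSup {γ : ℝ | γ ∈ Set.Ioo (0 : ℝ) 1 ∧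
    Integrable (fun ξ => ‖Ψ ξ‖ ^ γ / (1 + (Ψ ξ).re)) μ}

/-- The lower fractal index `I_l` (with `sSup ∅ = 0` in `ℝ`). -/
def fractalIndexL (n : ℕ) (Ψ : EuclideanSpace ℝ (Fin n) → ℂ)
    (μ : Measure (EuclideanSpace ℝ (Fin n))) : ℝ :=
  sSup {δ : ℝ | δ ∈ Set.Ioo (0 : ℝ) 1 ∧
    Integrable (fun ξ => ‖ξ‖ ^ (2 * δ) / (1 + (Ψ ξ).re)) μ}

/-- Subadditivity of `rpow` for exponents in `[0,1]`, real version. -/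
lemma myAddRpow {a b p : ℝ} (ha : 0 ≤ a) (hb : 0 ≤ b) (hp : 0 ≤ p) (hp1 : p ≤ 1) :
    (a + b) ^ p ≤ a ^ p + b ^ p := by
  have := NNReal.rpow_add_le_add_rpow ⟨a, ha⟩ ⟨b, hb⟩ hp hp1
  exact_mod_cast this

/-- Monotonicity of `sSup` for subsets of `Ioo 0 1`, handling the empty case. -/
lemma mySSupMono {s t : Set ℝ} (hst : s ⊆ t) (ht : t ⊆ Set.Ioo 0 1) : sSup s ≤ sSup t := by
  rcases s.eq_empty_or_nonempty with h | h
  · rw [h, Real.sSup_empty]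
    exact Real.sSup_nonneg fun x hx => (ht hx).1.le
  · exact csSup_le_csSup ⟨1, fun x hx => (ht hx).2.le⟩ h hst

theorem stmt1 (n : ℕ) (Ψ : EuclideanSpace ℝ (Fin n) → ℂ) (hΨmeas : Measurable Ψ)
    (hΨre : ∀ ξ, 0 ≤ (Ψ ξ).re)
    (hΨgrowth : ∃ C : ℝ, ∀ ξ, ‖Ψ ξ‖ ≤ C * (1 + ‖ξ‖ ^ 2))
    (μ : Measure (EuclideanSpace ℝ (Fin n)))
    (hDalang : Integrable (fun ξ => (1 + (Ψ ξ).re)⁻¹) μ) :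
    fractalIndexL n Ψ μ ≤ fractalIndexM n Ψ μ ∧
      fractalIndexM n Ψ μ ≤ fractalIndexU n Ψ μ := by
  obtain ⟨C, hC⟩ := hΨgrowth
  have hpos : ∀ ξ, (0:ℝ) < 1 + (Ψ ξ).re := fun ξ => by have := hΨre ξ; linarith
  have hmeasAbs : Measurable fun ξ => ‖Ψ ξ‖ :=
    continuous_norm.measurable.comp hΨmeas
  have hmeasRe : Measurable fun ξ => 1 + (Ψ ξ).re :=
    measurable_const.add (Complex.measurable_re.comp hΨmeas)
  constructor
  · -- L ≤ M
    apply mySSupMono ?_ (fun γ hγ => hγ.1)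
    rintro δ ⟨hδ, hint⟩
    refine ⟨hδ, ?_⟩
    set C' := max C 1 with hC'def
    have hC1 : (1:ℝ) ≤ C' := le_max_right _ _
    have hC0 : (0:ℝ) ≤ C' := by linarith
    have hbound : Integrable (fun ξ => C' ^ δ * ((1 + (Ψ ξ).re)⁻¹ +
        ‖ξ‖ ^ (2 * δ) / (1 + (Ψ ξ).re))) μ := (hDalang.add hint).const_mul _
    refine hbound.mono' ?_ ?_
    · apply Measurable.aestronglyMeasurable
      have hc : Continuous fun x : ℝ => x ^ δ :=
        continuous_id.rpow_const (fun x => Or.inr hδ.1.le)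
      exact (hc.measurable.comp hmeasAbs).div hmeasRe
    · filter_upwards with ξ
      have h1 := hpos ξ
      have habs : (0:ℝ) ≤ ‖Ψ ξ‖ := norm_nonneg _
      rw [Real.norm_of_nonneg (by positivity)]
      have step1 : ‖Ψ ξ‖ ^ δ ≤ (C' * (1 + ‖ξ‖ ^ 2)) ^ δ := by
        apply Real.rpow_le_rpow habs _ hδ.1.le
        calc ‖Ψ ξ‖ ≤ C * (1 + ‖ξ‖ ^ 2) := hC ξ
          _ ≤ C' * (1 + ‖ξ‖ ^ 2) := by
              have h2 : (0:ℝ) ≤ 1 + ‖ξ‖ ^ 2 := by positivity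
              nlinarith [le_max_left C 1]
      have step2 : (C' * (1 + ‖ξ‖ ^ 2)) ^ δ = C' ^ δ * (1 + ‖ξ‖ ^ 2) ^ δ :=
        Real.mul_rpow hC0 (by positivity)
      have step3 : (1 + ‖ξ‖ ^ 2) ^ δ ≤ 1 + ‖ξ‖ ^ (2 * δ) := by
        have h := myAddRpow zero_le_one (by positivity : (0:ℝ) ≤ ‖ξ‖ ^ 2) hδ.1.le hδ.2.le
        rw [Real.one_rpow] at h
        have hpow : (‖ξ‖ ^ 2 : ℝ) ^ δ = ‖ξ‖ ^ (2 * δ) := by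
          rw [← Real.rpow_natCast ‖ξ‖ 2, ← Real.rpow_mul (norm_nonneg ξ)]
          norm_num
        rwa [hpow] at h
      have hfinal : ‖Ψ ξ‖ ^ δ ≤ C' ^ δ * (1 + ‖ξ‖ ^ (2 * δ)) := by
        have hCp : (0:ℝ) ≤ C' ^ δ := Real.rpow_nonneg hC0 δ
        calc ‖Ψ ξ‖ ^ δ ≤ C' ^ δ * (1 + ‖ξ‖ ^ 2) ^ δ := step1.trans step2.le
          _ ≤ C' ^ δ * (1 + ‖ξ‖ ^ (2 * δ)) := by nlinarith
      calc ‖Ψ ξ‖ ^ δ / (1 + (Ψ ξ).re)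
          ≤ C' ^ δ * (1 + ‖ξ‖ ^ (2 * δ)) / (1 + (Ψ ξ).re) := by gcongr
        _ = C' ^ δ * ((1 + (Ψ ξ).re)⁻¹ + ‖ξ‖ ^ (2 * δ) / (1 + (Ψ ξ).re)) := by
            field_simp
            try ring
  · -- M ≤ U
    apply mySSupMono ?_ (fun η hη => hη.1)
    rintro γ ⟨hγ, hint⟩
    refine ⟨hγ, ?_⟩
    have hbound : Integrable (fun ξ => (1 + (Ψ ξ).re)⁻¹ +
        ‖Ψ ξ‖ ^ γ / (1 + (Ψ ξ).re)) μ := hDalang.add hint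
    refine hbound.mono' ?_ ?_
    · apply Measurable.aestronglyMeasurable
      have hc : Continuous fun x : ℝ => x ^ (1 - γ) :=
        continuous_id.rpow_const (fun x => Or.inr (by linarith [hγ.2]))
      exact (hc.measurable.comp hmeasRe).inv
    · filter_upwards with ξ
      have h1 := hpos ξ
      have habs : (0:ℝ) ≤ ‖Ψ ξ‖ := norm_nonneg _
      have hre : (Ψ ξ).re ≤ ‖Ψ ξ‖ := Complex.re_le_norm _
      have hrp : (0:ℝ) < (1 + (Ψ ξ).re) ^ (1 - γ) := Real.rpow_pos_of_pos h1 _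
      rw [Real.norm_of_nonneg (by positivity)]
      -- ((1+re)^(1-γ))⁻¹ = (1+re)^γ / (1+re)
      have key : ((1 + (Ψ ξ).re) ^ (1 - γ))⁻¹ = (1 + (Ψ ξ).re) ^ γ / (1 + (Ψ ξ).re) := by
        rw [← Real.rpow_neg h1.le, show -(1 - γ) = γ + (-1) by ring, Real.rpow_add h1,
          Real.rpow_neg_one, div_eq_mul_inv]
      rw [key]
      have hup : (1 + (Ψ ξ).re) ^ γ ≤ 1 + ‖Ψ ξ‖ ^ γ := by
        calc (1 + (Ψ ξ).re) ^ γ ≤ (1 + ‖Ψ ξ‖) ^ γ := by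
              apply Real.rpow_le_rpow h1.le (by linarith) hγ.1.le
          _ ≤ 1 ^ γ + ‖Ψ ξ‖ ^ γ := myAddRpow zero_le_one habs hγ.1.le hγ.2.le
          _ = 1 + ‖Ψ ξ‖ ^ γ := by rw [Real.one_rpow]
      calc (1 + (Ψ ξ).re) ^ γ / (1 + (Ψ ξ).re)
          ≤ (1 + ‖Ψ ξ‖ ^ γ) / (1 + (Ψ ξ).re) := by gcongr
        _ = (1 + (Ψ ξ).re)⁻¹ + ‖Ψ ξ‖ ^ γ / (1 + (Ψ ξ).re) := by
            field_simp
end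
end

section
/- Let I₀ ∈ (0,1) and let Ψ: ℝⁿ → ℂ be measurable such that: (i) |Ψ(ξ)| ≤ L(1 + ‖ξ‖²) for all ξ and some L > 0; (ii) the set {ξ ∈ ℝⁿ : |Ψ(ξ)| ≤ 1} is bounded; (iii) there exists m > 0 with |Ψ(ξ)| ≤ 1 whenever ‖ξ‖ < m; and (iv) ∫_{‖ξ‖ ≤ 1} |Ψ(ξ)| / ‖ξ‖^{n+I₀} dξ < ∞. Then for every κ ∈ (0, I₀/2), ∫_0^1 t^{−1−κ} ( ∫_{ℝⁿ} min(t|Ψ(ξ)|, 1) / ‖ξ‖^{n+I₀} dξ ) dt < ∞. -/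
open MeasureTheory Complex Set ENNReal

noncomputable section

theorem stmt10 (n : ℕ) (I₀ : ℝ) (hI₀ : I₀ ∈ Set.Ioo (0 : ℝ) 1)
    (Ψ : EuclideanSpace ℝ (Fin n) → ℂ) (hΨmeas : Measurable Ψ)
    (L : ℝ) (hL : 0 < L)
    (hgrowth : ∀ ξ : EuclideanSpace ℝ (Fin n), ‖Ψ ξ‖ ≤ L * (1 + ‖ξ‖ ^ 2))
    (hbdd : Bornology.IsBounded {ξ : EuclideanSpace ℝ (Fin n) | ‖Ψ ξ‖ ≤ 1})
    (hm : ∃ m : ℝ, 0 < m ∧ ∀ ξ : EuclideanSpace ℝ (Fin n), ‖ξ‖ < m → ‖Ψ ξ‖ ≤ 1)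
    (hint : IntegrableOn
      (fun ξ : EuclideanSpace ℝ (Fin n) => ‖Ψ ξ‖ / ‖ξ‖ ^ ((n : ℝ) + I₀))
      {ξ : EuclideanSpace ℝ (Fin n) | ‖ξ‖ ≤ 1}) :
    ∀ κ : ℝ, κ ∈ Set.Ioo (0 : ℝ) (I₀ / 2) →
      ∫⁻ t in Set.Ioo (0 : ℝ) 1,
          ENNReal.ofReal (t ^ (-1 - κ)) *
            ∫⁻ ξ : EuclideanSpace ℝ (Fin n),
              ENNReal.ofReal (min (t * ‖Ψ ξ‖) 1 / ‖ξ‖ ^ ((n : ℝ) + I₀)) < ⊤ := by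
  intro κ hκ
  obtain ⟨hκ0, hκI⟩ := hκ
  obtain ⟨hI0, hI1⟩ := hI₀
  -- choose α with κ < α < I₀/2, α ≤ 1
  set α : ℝ := (κ + I₀ / 2) / 2 with hα_def
  have hκα : κ < α := by simp only [hα_def]; linarith
  have hαI : α < I₀ / 2 := by simp only [hα_def]; linarith
  have hα0 : 0 < α := lt_trans hκ0 hκα
  have hα1 : α ≤ 1 := by simp only [hα_def]; linarith
  -- the decay exponent at infinity
  set r : ℝ := (n : ℝ) + I₀ - 2 * α with hr_def
  have hnr : (n : ℝ) < r := by simp only [hr_def]; linarith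
  have hr0 : 0 < r := lt_of_le_of_lt (Nat.cast_nonneg n) hnr
  set s : Set (EuclideanSpace ℝ (Fin n)) := {ξ : EuclideanSpace ℝ (Fin n) | ‖ξ‖ ≤ 1} with hs_def
  have hs_meas : MeasurableSet s := measurableSet_le (measurable_norm) measurable_const
  -- the finite constants
  set A : ℝ≥0∞ := ∫⁻ ξ in s, ENNReal.ofReal (‖Ψ ξ‖ / ‖ξ‖ ^ ((n : ℝ) + I₀)) with hA_def
  have hA : A < ⊤ := hint.setLIntegral_lt_top
  set B : ℝ≥0∞ := ∫⁻ ξ : EuclideanSpace ℝ (Fin n), ENNReal.ofReal ((1 + ‖ξ‖) ^ (-r)) with hB_def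
  have hB : B < ⊤ := by
    have hint2 : Integrable (fun ξ : EuclideanSpace ℝ (Fin n) => (1 + ‖ξ‖) ^ (-r)) := by
      apply integrable_one_add_norm
      rwa [finrank_euclideanSpace_fin]
    exact hint2.lintegral_lt_top
  set K : ℝ := (2 * L) ^ α * 2 ^ r with hK_def
  have hK0 : 0 ≤ K := by positivity
  set C : ℝ≥0∞ := A + ENNReal.ofReal K * B with hC_def
  have hC : C < ⊤ := by
    refine ENNReal.add_lt_top.2 ⟨hA, ENNReal.mul_lt_top ENNReal.ofReal_lt_top hB⟩
  -- inner bound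
  have hinner : ∀ t : ℝ, t ∈ Set.Ioo (0 : ℝ) 1 →
      (∫⁻ ξ : EuclideanSpace ℝ (Fin n), ENNReal.ofReal (min (t * ‖Ψ ξ‖) 1 / ‖ξ‖ ^ ((n : ℝ) + I₀)))
        ≤ ENNReal.ofReal (t ^ α) * C := by
    intro t ht
    obtain ⟨ht0, ht1⟩ := ht
    have htα : t ≤ t ^ α := by
      calc t = t ^ (1 : ℝ) := (Real.rpow_one t).symm
        _ ≤ t ^ α := Real.rpow_le_rpow_of_exponent_ge ht0 ht1.le hα1
    rw [← lintegral_add_compl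
      (fun ξ : EuclideanSpace ℝ (Fin n) => ENNReal.ofReal (min (t * ‖Ψ ξ‖) 1 / ‖ξ‖ ^ ((n : ℝ) + I₀))) hs_meas,
      hC_def, mul_add]
    gcongr
    · -- part on s : use hint
      calc (∫⁻ ξ in s, ENNReal.ofReal (min (t * ‖Ψ ξ‖) 1 / ‖ξ‖ ^ ((n : ℝ) + I₀)))
          ≤ ∫⁻ ξ in s, ENNReal.ofReal t *
              ENNReal.ofReal (‖Ψ ξ‖ / ‖ξ‖ ^ ((n : ℝ) + I₀)) := by
            apply lintegral_mono
            intro ξ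
            dsimp only
            rw [← ENNReal.ofReal_mul ht0.le]
            apply ENNReal.ofReal_le_ofReal
            rw [div_eq_mul_inv, div_eq_mul_inv, ← mul_assoc]
            apply mul_le_mul_of_nonneg_right (min_le_left _ _)
            positivity
        _ = ENNReal.ofReal t * A := lintegral_const_mul' _ _ ENNReal.ofReal_ne_top
        _ ≤ ENNReal.ofReal (t ^ α) * A := by
            gcongr
    · -- part on sᶜ : use the growth bound
      have hpt : ∀ ξ : EuclideanSpace ℝ (Fin n), ξ ∈ sᶜ →
          min (t * ‖Ψ ξ‖) 1 / ‖ξ‖ ^ ((n : ℝ) + I₀)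
            ≤ (t ^ α * K) * (1 + ‖ξ‖) ^ (-r) := by
        intro ξ hξ
        have hξ1 : 1 < ‖ξ‖ := by
          simp only [hs_def, Set.mem_compl_iff, Set.mem_setOf_eq, not_le] at hξ
          exact hξ
        have hξ0 : 0 < ‖ξ‖ := lt_trans one_pos hξ1
        have habs0 : 0 ≤ ‖Ψ ξ‖ := norm_nonneg _
        have hmin : min (t * ‖Ψ ξ‖) 1 ≤ (t * ‖Ψ ξ‖) ^ α := by
          set a : ℝ := t * ‖Ψ ξ‖ with ha_def
          have ha0 : 0 ≤ a := mul_nonneg ht0.le habs0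
          rcases le_or_gt a 1 with h | h
          · rcases eq_or_lt_of_le ha0 with h0 | h0
            · simp [← h0, Real.zero_rpow (ne_of_gt hα0)]
            · calc min a 1 ≤ a := min_le_left _ _
                _ = a ^ (1 : ℝ) := (Real.rpow_one a).symm
                _ ≤ a ^ α := Real.rpow_le_rpow_of_exponent_ge h0 h hα1
          · calc min a 1 ≤ 1 := min_le_right _ _
              _ ≤ a ^ α := Real.one_le_rpow h.le hα0.le
        have hΨbd : ‖Ψ ξ‖ ≤ 2 * L * ‖ξ‖ ^ (2 : ℝ) := by
          have h1 : (1 : ℝ) + ‖ξ‖ ^ 2 ≤ 2 * ‖ξ‖ ^ 2 := by nlinarith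
          calc ‖Ψ ξ‖ ≤ L * (1 + ‖ξ‖ ^ 2) := hgrowth ξ
            _ ≤ L * (2 * ‖ξ‖ ^ 2) := by nlinarith
            _ = 2 * L * ‖ξ‖ ^ (2 : ℝ) := by
                rw [Real.rpow_two]; ring
        have hstep : (t * ‖Ψ ξ‖) ^ α ≤ t ^ α * ((2 * L) ^ α * ‖ξ‖ ^ (2 * α)) := by
          rw [Real.mul_rpow ht0.le habs0]
          refine mul_le_mul_of_nonneg_left ?_ (Real.rpow_nonneg ht0.le α)
          calc ‖Ψ ξ‖ ^ α ≤ (2 * L * ‖ξ‖ ^ (2 : ℝ)) ^ α :=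
                Real.rpow_le_rpow habs0 hΨbd hα0.le
            _ = (2 * L) ^ α * ‖ξ‖ ^ (2 * α) := by
                rw [Real.mul_rpow (by positivity) (Real.rpow_nonneg hξ0.le 2),
                  ← Real.rpow_mul hξ0.le]
        have hnorm_pow_pos : (0 : ℝ) < ‖ξ‖ ^ ((n : ℝ) + I₀) := Real.rpow_pos_of_pos hξ0 _
        have hdecay : ‖ξ‖ ^ (2 * α) / ‖ξ‖ ^ ((n : ℝ) + I₀) ≤ 2 ^ r * (1 + ‖ξ‖) ^ (-r) := by
          have h1 : ‖ξ‖ ^ (2 * α) / ‖ξ‖ ^ ((n : ℝ) + I₀) = ‖ξ‖ ^ (-r) := by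
            rw [← Real.rpow_sub hξ0]
            congr 1
            simp only [hr_def]; ring
          rw [h1, Real.rpow_neg hξ0.le, Real.rpow_neg (by positivity)]
          have h2 : (1 + ‖ξ‖) ^ r ≤ 2 ^ r * ‖ξ‖ ^ r := by
            calc (1 + ‖ξ‖) ^ r ≤ (2 * ‖ξ‖) ^ r :=
                Real.rpow_le_rpow (by positivity) (by linarith) hr0.le
              _ = 2 ^ r * ‖ξ‖ ^ r := Real.mul_rpow (by norm_num) hξ0.le
          rw [← div_eq_mul_inv, le_div_iff₀ (by positivity), inv_mul_eq_div,
            div_le_iff₀ (by positivity)]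
          calc (1 + ‖ξ‖) ^ r ≤ 2 ^ r * ‖ξ‖ ^ r := h2
            _ = 2 ^ r * ‖ξ‖ ^ r := rfl
        calc min (t * ‖Ψ ξ‖) 1 / ‖ξ‖ ^ ((n : ℝ) + I₀)
            ≤ (t ^ α * ((2 * L) ^ α * ‖ξ‖ ^ (2 * α))) / ‖ξ‖ ^ ((n : ℝ) + I₀) := by
              apply div_le_div_of_nonneg_right _ hnorm_pow_pos.le
              exact le_trans hmin hstep
          _ = (t ^ α * (2 * L) ^ α) * (‖ξ‖ ^ (2 * α) / ‖ξ‖ ^ ((n : ℝ) + I₀)) := by ring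
          _ ≤ (t ^ α * (2 * L) ^ α) * (2 ^ r * (1 + ‖ξ‖) ^ (-r)) := by
              apply mul_le_mul_of_nonneg_left hdecay
              positivity
          _ = (t ^ α * K) * (1 + ‖ξ‖) ^ (-r) := by
              simp only [hK_def]; ring
      calc (∫⁻ ξ in sᶜ, ENNReal.ofReal (min (t * ‖Ψ ξ‖) 1 / ‖ξ‖ ^ ((n : ℝ) + I₀)))
          ≤ ∫⁻ ξ in sᶜ, ENNReal.ofReal (t ^ α * K) * ENNReal.ofReal ((1 + ‖ξ‖) ^ (-r)) := by
            apply setLIntegral_mono' hs_meas.compl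
            intro ξ hξ
            rw [← ENNReal.ofReal_mul (by positivity)]
            exact ENNReal.ofReal_le_ofReal (hpt ξ hξ)
        _ = ENNReal.ofReal (t ^ α * K) *
              ∫⁻ ξ in sᶜ, ENNReal.ofReal ((1 + ‖ξ‖) ^ (-r)) :=
            lintegral_const_mul' _ _ ENNReal.ofReal_ne_top
        _ ≤ ENNReal.ofReal (t ^ α * K) * B := by
            gcongr
            exact setLIntegral_le_lintegral _ _
        _ = ENNReal.ofReal (t ^ α) * (ENNReal.ofReal K * B) := by
            rw [ENNReal.ofReal_mul (by positivity), mul_assoc]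
  -- now the outer integral
  have houter : (∫⁻ t in Set.Ioo (0 : ℝ) 1,
        ENNReal.ofReal (t ^ (-1 - κ)) *
          ∫⁻ ξ : EuclideanSpace ℝ (Fin n), ENNReal.ofReal (min (t * ‖Ψ ξ‖) 1 / ‖ξ‖ ^ ((n : ℝ) + I₀)))
      ≤ (∫⁻ t in Set.Ioo (0 : ℝ) 1, ENNReal.ofReal (t ^ (α - 1 - κ))) * C := by
    rw [← lintegral_mul_const' C _ (ne_of_lt hC)]
    apply setLIntegral_mono' measurableSet_Ioo
    intro t ht
    calc ENNReal.ofReal (t ^ (-1 - κ)) *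
          ∫⁻ ξ : EuclideanSpace ℝ (Fin n), ENNReal.ofReal (min (t * ‖Ψ ξ‖) 1 / ‖ξ‖ ^ ((n : ℝ) + I₀))
        ≤ ENNReal.ofReal (t ^ (-1 - κ)) * (ENNReal.ofReal (t ^ α) * C) := by
          gcongr
          exact hinner t ht
      _ = ENNReal.ofReal (t ^ (α - 1 - κ)) * C := by
          rw [← mul_assoc, ← ENNReal.ofReal_mul (Real.rpow_nonneg (le_of_lt ht.1) _),
            ← Real.rpow_add ht.1]
          ring_nf
  refine lt_of_le_of_lt houter ?_
  apply ENNReal.mul_lt_top _ hC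
  have hintegrable : IntegrableOn (fun t : ℝ => t ^ (α - 1 - κ)) (Set.Ioo (0 : ℝ) 1) := by
    rw [intervalIntegral.integrableOn_Ioo_rpow_iff one_pos]
    linarith
  exact hintegrable.setLIntegral_lt_top
end
end

section
/- Fix n ≥ 1, T > 0, β > 0, κ > 0, I₀ ∈ (0,1), θ ∈ (0,1] and constants C₁, C₂ > 0. Suppose that for each t ∈ (0,2T], p_t: ℝⁿ → [0,∞) is a measurable probability density (∫_{ℝⁿ} p_t(x) dx = 1) satisfying: (i) |p_{t+ε}(x) − p_t(x)| ≤ C₁ ε^θ t^{−(2θ+n)/β} for all x ∈ ℝⁿ, all t ∈ (0,T] and all ε ∈ (0,T], and (ii) ∫_{ℝⁿ} ‖x‖^{I₀} p_t(x) dx ≤ C₂ t^κ for all t ∈ (0,2T]. Then for every ω ∈ (0,1] there is a constant C > 0 such that for all t ∈ (0,T] and all ε ∈ (0,T], ∫_{ℝⁿ} |p_{t+ε}(x) − p_t(x)| dx ≤ C ( ε^θ t^{−((2θ+n)/β + κ)} )^{ω I₀/(n+I₀)}. -/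
open MeasureTheory Set

noncomputable section

theorem stmt14 (n : ℕ) (hn : 1 ≤ n) (T β κ I₀ θ C₁ C₂ : ℝ)
    (hT : 0 < T) (hβ : 0 < β) (hκ : 0 < κ) (hI₀ : I₀ ∈ Set.Ioo (0 : ℝ) 1)
    (hθ : θ ∈ Set.Ioc (0 : ℝ) 1) (hC₁ : 0 < C₁) (hC₂ : 0 < C₂)
    (p : ℝ → EuclideanSpace ℝ (Fin n) → ℝ)
    (hmeas : ∀ t ∈ Set.Ioc (0 : ℝ) (2 * T), Measurable (p t))
    (hnonneg : ∀ t ∈ Set.Ioc (0 : ℝ) (2 * T), ∀ x, 0 ≤ p t x)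
    (hintble : ∀ t ∈ Set.Ioc (0 : ℝ) (2 * T), Integrable (p t))
    (hprob : ∀ t ∈ Set.Ioc (0 : ℝ) (2 * T), ∫ x, p t x = 1)
    (hsup : ∀ t ∈ Set.Ioc (0 : ℝ) T, ∀ ε ∈ Set.Ioc (0 : ℝ) T, ∀ x : EuclideanSpace ℝ (Fin n),
      |p (t + ε) x - p t x| ≤ C₁ * ε ^ θ * t ^ (-((2 * θ + n) / β)))
    (hmom : ∀ t ∈ Set.Ioc (0 : ℝ) (2 * T),
      ∫⁻ x, ENNReal.ofReal (‖x‖ ^ I₀ * p t x) ≤ ENNReal.ofReal (C₂ * t ^ κ)) :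
    ∀ ω : ℝ, ω ∈ Set.Ioc (0 : ℝ) 1 →
      ∃ C : ℝ, 0 < C ∧ ∀ t ∈ Set.Ioc (0 : ℝ) T, ∀ ε ∈ Set.Ioc (0 : ℝ) T,
        ∫ x, |p (t + ε) x - p t x| ≤
          C * (ε ^ θ * t ^ (-((2 * θ + n) / β + κ))) ^ (ω * I₀ / (n + I₀)) := by
  intro ω hω
  obtain ⟨hI0, hI1⟩ := hI₀
  obtain ⟨hθ0, hθ1⟩ := hθ
  obtain ⟨hω0, hω1⟩ := hω
  haveI : NeZero n := ⟨by omega⟩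
  set A : ℝ := (2 * θ + n) / β with hA
  have hnpos : (0:ℝ) < n := by exact_mod_cast Nat.pos_of_ne_zero (by omega)
  have hnI : (0:ℝ) < n + I₀ := by positivity
  set a : ℝ := I₀ / (n + I₀) with ha
  have ha_pos : 0 < a := by positivity
  have ha1 : a ≤ 1 := by
    rw [ha, div_le_one hnI]; linarith
  set V : ℝ := (volume (Metric.ball (0 : EuclideanSpace ℝ (Fin n)) 1)).toReal with hV
  have hV0 : 0 ≤ V := ENNReal.toReal_nonneg
  set c₂ : ℝ := 2 * C₂ * (2*T) ^ κ with hc₂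
  have hc₂0 : 0 < c₂ := by positivity
  set K : ℝ := (C₁ * V + c₂) * T ^ (κ * a) with hK
  have hK0 : 0 < K := by positivity
  refine ⟨2 + K, by positivity, ?_⟩
  intro t ht ε hε
  obtain ⟨ht0, htT⟩ := ht
  obtain ⟨hε0, hεT⟩ := hε
  have ht2 : t ∈ Set.Ioc (0:ℝ) (2*T) := ⟨ht0, by linarith⟩
  have htε2 : t + ε ∈ Set.Ioc (0:ℝ) (2*T) := ⟨by linarith, by linarith⟩
  set D : ℝ := ε ^ θ * t ^ (-A) with hD
  have hD0 : 0 < D :=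
    mul_pos (Real.rpow_pos_of_pos hε0 θ) (Real.rpow_pos_of_pos ht0 _)
  set X : ℝ := ε ^ θ * t ^ (-(A + κ)) with hX
  have hX0 : 0 < X :=
    mul_pos (Real.rpow_pos_of_pos hε0 θ) (Real.rpow_pos_of_pos ht0 _)
  have hDX : D = X * t ^ κ := by
    rw [hD, hX, mul_assoc, ← Real.rpow_add ht0]
    ring_nf
  set R : ℝ := D ^ (-(1/((n:ℝ) + I₀))) with hR
  have hR0 : 0 < R := Real.rpow_pos_of_pos hD0 _
  -- trivial bound by 2
  have hdiff_int : Integrable (fun x => |p (t+ε) x - p t x|) :=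
    ((hintble _ htε2).sub (hintble _ ht2)).abs
  have hsum_int : Integrable (fun x => p (t+ε) x + p t x) :=
    (hintble _ htε2).add (hintble _ ht2)
  have habs_le : ∀ x, |p (t+ε) x - p t x| ≤ p (t+ε) x + p t x := by
    intro x
    calc |p (t+ε) x - p t x| ≤ |p (t+ε) x| + |p t x| := abs_sub _ _
    _ = p (t+ε) x + p t x := by
        rw [abs_of_nonneg (hnonneg _ htε2 x), abs_of_nonneg (hnonneg _ ht2 x)]
  have htrivial : ∫ x, |p (t+ε) x - p t x| ≤ 2 := by
    calc ∫ x, |p (t+ε) x - p t x| ≤ ∫ x, (p (t+ε) x + p t x) :=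
          integral_mono hdiff_int hsum_int habs_le
    _ = 2 := by
        rw [integral_add (hintble _ htε2) (hintble _ ht2), hprob _ htε2, hprob _ ht2]
        norm_num
  -- tail bound
  have tail : ∀ s ∈ Set.Ioc (0:ℝ) (2*T),
      ∫ x in (Metric.ball (0:EuclideanSpace ℝ (Fin n)) R)ᶜ, p s x ≤ C₂ * s ^ κ * R ^ (-I₀) := by
    intro s hs
    set g : EuclideanSpace ℝ (Fin n) → ℝ := fun x => ‖x‖ ^ I₀ * p s x with hg
    have hgmeas : Measurable g :=
      (measurable_norm.pow_const _).mul (hmeas _ hs)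
    have hgnn : ∀ x, 0 ≤ g x := fun x =>
      mul_nonneg (Real.rpow_nonneg (norm_nonneg _) _) (hnonneg _ hs x)
    have hgint : Integrable g := by
      refine ⟨hgmeas.aestronglyMeasurable, ?_⟩
      rw [hasFiniteIntegral_iff_ofReal (Filter.Eventually.of_forall hgnn)]
      exact lt_of_le_of_lt (hmom _ hs) ENNReal.ofReal_lt_top
    have hgle : ∫ x, g x ≤ C₂ * s ^ κ := by
      rw [integral_eq_lintegral_of_nonneg_ae (Filter.Eventually.of_forall hgnn)
        hgmeas.aestronglyMeasurable]
      exact ENNReal.toReal_le_of_le_ofReal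
        (mul_nonneg hC₂.le (Real.rpow_nonneg hs.1.le κ)) (hmom _ hs)
    calc ∫ x in (Metric.ball (0:EuclideanSpace ℝ (Fin n)) R)ᶜ, p s x
        ≤ ∫ x in (Metric.ball (0:EuclideanSpace ℝ (Fin n)) R)ᶜ, R ^ (-I₀) * g x := by
          refine setIntegral_mono_on (hintble _ hs).integrableOn
            (hgint.const_mul _).integrableOn measurableSet_ball.compl ?_
          intro x hx
          have hxR : R ≤ ‖x‖ := by
            simpa [Metric.mem_ball, dist_eq_norm] using hx
          have h1 : R ^ I₀ ≤ ‖x‖ ^ I₀ :=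
            Real.rpow_le_rpow hR0.le hxR hI0.le
          have h2 : (1:ℝ) ≤ R ^ (-I₀) * ‖x‖ ^ I₀ := by
            rw [Real.rpow_neg hR0.le, ← div_eq_inv_mul,
              le_div_iff₀ (Real.rpow_pos_of_pos hR0 I₀)]
            linarith
          calc p s x = 1 * p s x := (one_mul _).symm
          _ ≤ (R ^ (-I₀) * ‖x‖ ^ I₀) * p s x :=
              mul_le_mul_of_nonneg_right h2 (hnonneg _ hs x)
          _ = R ^ (-I₀) * g x := by rw [hg]; ring
    _ = R ^ (-I₀) * ∫ x in (Metric.ball (0:EuclideanSpace ℝ (Fin n)) R)ᶜ, g x :=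
        integral_const_mul _ _
    _ ≤ R ^ (-I₀) * ∫ x, g x := by
        refine mul_le_mul_of_nonneg_left ?_ (by positivity)
        exact setIntegral_le_integral hgint (Filter.Eventually.of_forall hgnn)
    _ ≤ R ^ (-I₀) * (C₂ * s ^ κ) :=
        mul_le_mul_of_nonneg_left hgle (by positivity)
    _ = C₂ * s ^ κ * R ^ (-I₀) := by ring
  -- main split bound
  have hmain : ∫ x, |p (t+ε) x - p t x| ≤ C₁ * D * (R ^ n * V) + c₂ * R ^ (-I₀) := by
    have hsplit : ∫ x, |p (t+ε) x - p t x| =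
        (∫ x in Metric.ball (0:EuclideanSpace ℝ (Fin n)) R, |p (t+ε) x - p t x|) +
        ∫ x in (Metric.ball (0:EuclideanSpace ℝ (Fin n)) R)ᶜ, |p (t+ε) x - p t x| :=
      (integral_add_compl measurableSet_ball hdiff_int).symm
    have hball : ∫ x in Metric.ball (0:EuclideanSpace ℝ (Fin n)) R, |p (t+ε) x - p t x|
        ≤ C₁ * D * (R ^ n * V) := by
      have hvol : (volume (Metric.ball (0:EuclideanSpace ℝ (Fin n)) R)).toReal = R ^ n * V := by
        rw [Measure.addHaar_ball volume _ hR0.le, ENNReal.toReal_mul,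
          ENNReal.toReal_ofReal (by positivity), finrank_euclideanSpace_fin]
      calc ∫ x in Metric.ball (0:EuclideanSpace ℝ (Fin n)) R, |p (t+ε) x - p t x|
          ≤ ∫ _x in Metric.ball (0:EuclideanSpace ℝ (Fin n)) R, (C₁ * ε ^ θ * t ^ (-A)) := by
            refine setIntegral_mono_on hdiff_int.integrableOn
              (integrableOn_const measure_ball_lt_top.ne enorm_ne_top) measurableSet_ball ?_
            intro x _
            exact hsup t ⟨ht0, htT⟩ ε ⟨hε0, hεT⟩ x
      _ = (volume (Metric.ball (0:EuclideanSpace ℝ (Fin n)) R)).toReal * (C₁ * ε ^ θ * t ^ (-A)) := by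
            rw [setIntegral_const, smul_eq_mul]; rfl
      _ = C₁ * D * (R ^ n * V) := by rw [hvol, hD]; ring
    have htail : ∫ x in (Metric.ball (0:EuclideanSpace ℝ (Fin n)) R)ᶜ, |p (t+ε) x - p t x|
        ≤ c₂ * R ^ (-I₀) := by
      calc ∫ x in (Metric.ball (0:EuclideanSpace ℝ (Fin n)) R)ᶜ, |p (t+ε) x - p t x|
          ≤ ∫ x in (Metric.ball (0:EuclideanSpace ℝ (Fin n)) R)ᶜ, (p (t+ε) x + p t x) :=
            setIntegral_mono_on hdiff_int.integrableOn hsum_int.integrableOn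
              measurableSet_ball.compl (fun x _ => habs_le x)
      _ = (∫ x in (Metric.ball (0:EuclideanSpace ℝ (Fin n)) R)ᶜ, p (t+ε) x) +
            ∫ x in (Metric.ball (0:EuclideanSpace ℝ (Fin n)) R)ᶜ, p t x :=
            integral_add (hintble _ htε2).integrableOn (hintble _ ht2).integrableOn
      _ ≤ C₂ * (t+ε) ^ κ * R ^ (-I₀) + C₂ * t ^ κ * R ^ (-I₀) :=
            add_le_add (tail _ htε2) (tail _ ht2)
      _ ≤ C₂ * (2*T) ^ κ * R ^ (-I₀) + C₂ * (2*T) ^ κ * R ^ (-I₀) := by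
            have h1 : (t+ε) ^ κ ≤ (2*T) ^ κ :=
              Real.rpow_le_rpow (by linarith) htε2.2 hκ.le
            have h2 : t ^ κ ≤ (2*T) ^ κ :=
              Real.rpow_le_rpow ht0.le ht2.2 hκ.le
            have hRp : (0:ℝ) ≤ R ^ (-I₀) := by positivity
            gcongr
      _ = c₂ * R ^ (-I₀) := by rw [hc₂]; ring
    rw [hsplit]
    exact add_le_add hball htail
  -- algebra
  have hRn : (R : ℝ) ^ n = D ^ (-((n:ℝ)/((n:ℝ) + I₀))) := by
    rw [← Real.rpow_natCast R n, hR, ← Real.rpow_mul hD0.le]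
    congr 1
    ring
  have hRI : R ^ (-I₀) = D ^ a := by
    rw [hR, ← Real.rpow_mul hD0.le, ha]
    congr 1
    ring
  have hDRn : D * R ^ n = D ^ a := by
    rw [hRn]
    rw [show D * D ^ (-((n:ℝ)/((n:ℝ) + I₀))) = D ^ (1 + -((n:ℝ)/((n:ℝ) + I₀))) by
      rw [Real.rpow_add hD0, Real.rpow_one]]
    congr 1
    rw [ha]
    field_simp
    ring
  have hbound2 : C₁ * D * (R ^ n * V) + c₂ * R ^ (-I₀) = (C₁ * V + c₂) * D ^ a := by
    rw [hRI, show C₁ * D * (R ^ n * V) = C₁ * V * (D * R ^ n) by ring, hDRn]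
    ring
  have hfinal : ∫ x, |p (t+ε) x - p t x| ≤ K * X ^ a := by
    calc ∫ x, |p (t+ε) x - p t x| ≤ C₁ * D * (R ^ n * V) + c₂ * R ^ (-I₀) := hmain
    _ = (C₁ * V + c₂) * D ^ a := hbound2
    _ = (C₁ * V + c₂) * (X ^ a * t ^ (κ * a)) := by
        rw [hDX, Real.mul_rpow hX0.le (Real.rpow_nonneg ht0.le κ),
          ← Real.rpow_mul ht0.le]
    _ ≤ (C₁ * V + c₂) * (X ^ a * T ^ (κ * a)) := by
        have h2 : t ^ (κ * a) ≤ T ^ (κ * a) :=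
          Real.rpow_le_rpow ht0.le htT (by positivity)
        have hXa : 0 ≤ X ^ a := (Real.rpow_pos_of_pos hX0 a).le
        have hcc : 0 ≤ C₁ * V + c₂ := by positivity
        exact mul_le_mul_of_nonneg_left (mul_le_mul_of_nonneg_left h2 hXa) hcc
    _ = K * X ^ a := by rw [hK]; ring
  have hωa : ω * I₀ / ((n:ℝ) + I₀) = ω * a := by
    rw [ha]; ring
  rw [hωa]
  have hXωa : 0 < X ^ (ω * a) := Real.rpow_pos_of_pos hX0 _
  have hωa_le : ω * a ≤ a := by
    have h := mul_le_mul_of_nonneg_right hω1 ha_pos.le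
    linarith
  rcases le_or_gt X 1 with hX1 | hX1
  · have hmono : X ^ a ≤ X ^ (ω * a) :=
      Real.rpow_le_rpow_of_exponent_ge hX0 hX1 hωa_le
    calc ∫ x, |p (t+ε) x - p t x| ≤ K * X ^ a := hfinal
    _ ≤ K * X ^ (ω * a) := mul_le_mul_of_nonneg_left hmono hK0.le
    _ ≤ (2 + K) * X ^ (ω * a) :=
        mul_le_mul_of_nonneg_right (by linarith) hXωa.le
  · calc ∫ x, |p (t+ε) x - p t x| ≤ 2 := htrivial
    _ ≤ 2 * X ^ (ω * a) := by
        have h1 : (1:ℝ) ≤ X ^ (ω * a) := Real.one_le_rpow hX1.le (by positivity)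
        linarith
    _ ≤ (2 + K) * X ^ (ω * a) :=
        mul_le_mul_of_nonneg_right (by linarith) hXωa.le
end
end

section
/- Let Ψ: ℝⁿ → ℂ be measurable with Re Ψ ≥ 0 and such that the set {ξ ∈ ℝⁿ : |Ψ(ξ)| ≤ 1} is bounded. Let μ be a nonnegative Borel measure on ℝⁿ that is finite on bounded sets. If ∫_{ℝⁿ} |Ψ(ξ)|^γ μ(dξ) / (1 + Re Ψ(ξ)) < ∞ for some γ ∈ (0,1), then for every η ∈ (0,γ), ∫_{ℝⁿ} μ(dξ) / (1 + Re Ψ(ξ))^{1−η} < ∞. -/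
open MeasureTheory Complex Set

noncomputable section

theorem stmt15 (n : ℕ) (Ψ : EuclideanSpace ℝ (Fin n) → ℂ) (hΨmeas : Measurable Ψ)
    (hΨre : ∀ ξ, 0 ≤ (Ψ ξ).re)
    (hbdd : Bornology.IsBounded {ξ : EuclideanSpace ℝ (Fin n) | ‖Ψ ξ‖ ≤ 1})
    (μ : Measure (EuclideanSpace ℝ (Fin n))) (hμ : ∀ s : Set (EuclideanSpace ℝ (Fin n)), Bornology.IsBounded s → μ s < ⊤)
    (γ : ℝ) (hγ : γ ∈ Set.Ioo (0 : ℝ) 1)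
    (hint : Integrable (fun ξ => ‖Ψ ξ‖ ^ γ / (1 + (Ψ ξ).re)) μ) :
    ∀ η : ℝ, η ∈ Set.Ioo (0 : ℝ) γ →
      Integrable (fun ξ => ((1 + (Ψ ξ).re) ^ (1 - η))⁻¹) μ := by
  intro η hη
  obtain ⟨hη0, hηγ⟩ := hη
  obtain ⟨hγ0, hγ1⟩ := hγ
  set A : Set (EuclideanSpace ℝ (Fin n)) := {ξ | ‖Ψ ξ‖ ≤ 1} with hA
  have hAmeas : MeasurableSet A := by
    have : Measurable fun ξ => ‖Ψ ξ‖ :=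
      continuous_norm.measurable.comp hΨmeas
    exact measurableSet_le this measurable_const
  have hAfin : μ A < ⊤ := hμ A hbdd
  have hind : Integrable (A.indicator fun _ => (1 : ℝ)) μ := by
    rw [integrable_indicator_iff hAmeas]
    exact (integrableOn_const_iff).2 (Or.inr hAfin)
  have hbound : Integrable
      (fun ξ => A.indicator (fun _ => (1 : ℝ)) ξ + 2 * (‖Ψ ξ‖ ^ γ / (1 + (Ψ ξ).re))) μ :=
    hind.add (hint.const_mul 2)
  have hpos : ∀ ξ, (0:ℝ) < 1 + (Ψ ξ).re := fun ξ => by linarith [hΨre ξ]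
  have hgnn : ∀ ξ, (0:ℝ) ≤ ‖Ψ ξ‖ ^ γ / (1 + (Ψ ξ).re) := fun ξ =>
    div_nonneg (Real.rpow_nonneg (norm_nonneg _) _) (hpos ξ).le
  have hfnn : ∀ ξ, (0:ℝ) ≤ ((1 + (Ψ ξ).re) ^ (1 - η))⁻¹ := fun ξ =>
    inv_nonneg.2 (Real.rpow_nonneg (hpos ξ).le _)
  apply Integrable.mono hbound
  · apply Measurable.aestronglyMeasurable
    have h1 : Measurable fun ξ => (Ψ ξ).re := Complex.measurable_re.comp hΨmeas
    fun_prop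
  · filter_upwards with ξ
    rw [Real.norm_of_nonneg (hfnn ξ)]
    have hnormb : ‖A.indicator (fun _ => (1:ℝ)) ξ + 2 * (‖Ψ ξ‖ ^ γ / (1 + (Ψ ξ).re))‖
        = A.indicator (fun _ => (1:ℝ)) ξ + 2 * (‖Ψ ξ‖ ^ γ / (1 + (Ψ ξ).re)) := by
      apply Real.norm_of_nonneg
      have : (0:ℝ) ≤ A.indicator (fun _ => (1:ℝ)) ξ := Set.indicator_nonneg (fun _ _ => zero_le_one) ξ
      nlinarith [hgnn ξ]
    rw [hnormb]
    by_cases hξ : ‖Ψ ξ‖ ≤ 1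
    · have hmem : ξ ∈ A := hξ
      rw [Set.indicator_of_mem hmem]
      have h1 : ((1 + (Ψ ξ).re) ^ (1 - η))⁻¹ ≤ 1 := by
        rw [inv_le_one_iff₀]
        right
        apply Real.one_le_rpow (by linarith [hΨre ξ]) (by linarith)
      nlinarith [hgnn ξ]
    · push_neg at hξ
      have hmem : ξ ∉ A := by simp [hA]; linarith
      rw [Set.indicator_of_notMem hmem, zero_add]
      set a := ‖Ψ ξ‖ with ha
      set r := (Ψ ξ).re with hr
      have hra : r ≤ a := Complex.re_le_norm _
      have h2a : 1 + r ≤ 2 * a := by linarith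
      have key : (1 + r) ^ η ≤ 2 * a ^ γ := by
        calc (1 + r) ^ η ≤ (2 * a) ^ η :=
              Real.rpow_le_rpow (hpos ξ).le h2a hη0.le
          _ = 2 ^ η * a ^ η := Real.mul_rpow (by norm_num) (by linarith)
          _ ≤ 2 * a ^ γ := by
              have h1 : (2:ℝ) ^ η ≤ 2 := by
                calc (2:ℝ) ^ η ≤ 2 ^ (1:ℝ) :=
                      Real.rpow_le_rpow_of_exponent_le (by norm_num) (by linarith)
                  _ = 2 := Real.rpow_one 2
              have h2 : a ^ η ≤ a ^ γ :=
                Real.rpow_le_rpow_of_exponent_le hξ.le hηγ.le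
              have h3 : (0:ℝ) ≤ a ^ η := Real.rpow_nonneg (by linarith) _
              have h4 : (0:ℝ) ≤ a ^ γ := Real.rpow_nonneg (by linarith) _
              nlinarith
      have heq : ((1 + r) ^ (1 - η))⁻¹ = (1 + r) ^ η / (1 + r) := by
        rw [← Real.rpow_neg (hpos ξ).le, div_eq_mul_inv, ← Real.rpow_neg_one (1 + r),
          ← Real.rpow_add (hpos ξ)]
        congr 1
        ring
      rw [heq, ← mul_div_assoc]
      gcongr
      exact (hpos ξ).le
end
end

section
/- Let Ψ: ℝⁿ → ℂ be measurable with Re Ψ ≥ 0, and suppose there exist M > 0 and β ∈ (0,2] such that Re Ψ(ξ) ≥ ‖ξ‖^β whenever ‖ξ‖ > M. Let μ be a nonnegative Borel measure on ℝⁿ that is finite on bounded sets. If ∫_{ℝⁿ} μ(dξ) / (1 + Re Ψ(ξ))^{1−η} < ∞ for some η ∈ (0,1), then for every δ ∈ (0, ηβ/2), ∫_{ℝⁿ} ‖ξ‖^{2δ} μ(dξ) / (1 + Re Ψ(ξ)) < ∞. -/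
open MeasureTheory Complex Set

noncomputable section

theorem stmt16 (n : ℕ) (Ψ : EuclideanSpace ℝ (Fin n) → ℂ) (hΨmeas : Measurable Ψ)
    (hΨre : ∀ ξ, 0 ≤ (Ψ ξ).re)
    (M β : ℝ) (hM : 0 < M) (hβ : β ∈ Set.Ioc (0 : ℝ) 2)
    (hgrowth : ∀ ξ : EuclideanSpace ℝ (Fin n), M < ‖ξ‖ → ‖ξ‖ ^ β ≤ (Ψ ξ).re)
    (μ : Measure (EuclideanSpace ℝ (Fin n)))
    (hμ : ∀ s : Set (EuclideanSpace ℝ (Fin n)), Bornology.IsBounded s → μ s < ⊤)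
    (η : ℝ) (hη : η ∈ Set.Ioo (0 : ℝ) 1)
    (hint : Integrable (fun ξ => ((1 + (Ψ ξ).re) ^ (1 - η))⁻¹) μ) :
    ∀ δ : ℝ, δ ∈ Set.Ioo (0 : ℝ) (η * β / 2) →
      Integrable (fun ξ => ‖ξ‖ ^ (2 * δ) / (1 + (Ψ ξ).re)) μ := by
  intro δ hδ
  obtain ⟨hβ0, hβ2⟩ := hβ
  obtain ⟨hη0, hη1⟩ := hη
  obtain ⟨hδ0, hδlt⟩ := hδ
  have h1Ψ : ∀ ξ, (1:ℝ) ≤ 1 + (Ψ ξ).re := fun ξ => by linarith [hΨre ξ]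
  have h0Ψ : ∀ ξ, (0:ℝ) < 1 + (Ψ ξ).re := fun ξ => lt_of_lt_of_le one_pos (h1Ψ ξ)
  set g : EuclideanSpace ℝ (Fin n) → ℝ :=
    fun ξ => (Metric.closedBall (0 : EuclideanSpace ℝ (Fin n)) M).indicator
      (fun _ => M ^ (2 * δ)) ξ + ((1 + (Ψ ξ).re) ^ (1 - η))⁻¹ with hg
  have hgint : Integrable g μ := by
    refine Integrable.add ?_ hint
    rw [integrable_indicator_iff measurableSet_closedBall]
    exact integrableOn_const (hμ _ Metric.isBounded_closedBall).ne
  have hmeas : AEStronglyMeasurable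
      (fun ξ : EuclideanSpace ℝ (Fin n) => ‖ξ‖ ^ (2 * δ) / (1 + (Ψ ξ).re)) μ := by
    apply Measurable.aestronglyMeasurable
    exact (measurable_norm.pow_const _).div
      (measurable_const.add (Complex.measurable_re.comp hΨmeas))
  refine hgint.mono' hmeas (Filter.Eventually.of_forall fun ξ => ?_)
  have hf0 : (0:ℝ) ≤ ‖ξ‖ ^ (2 * δ) / (1 + (Ψ ξ).re) :=
    div_nonneg (Real.rpow_nonneg (norm_nonneg _) _) (h0Ψ ξ).le
  rw [Real.norm_of_nonneg hf0]
  have hinv0 : (0:ℝ) ≤ ((1 + (Ψ ξ).re) ^ (1 - η))⁻¹ :=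
    inv_nonneg.2 (Real.rpow_nonneg (h0Ψ ξ).le _)
  by_cases hξ : ‖ξ‖ ≤ M
  · have h1 : ‖ξ‖ ^ (2 * δ) / (1 + (Ψ ξ).re) ≤ M ^ (2 * δ) := by
      calc ‖ξ‖ ^ (2 * δ) / (1 + (Ψ ξ).re) ≤ ‖ξ‖ ^ (2 * δ) / 1 :=
            div_le_div_of_nonneg_left (Real.rpow_nonneg (norm_nonneg _) _) one_pos (h1Ψ ξ)
        _ = ‖ξ‖ ^ (2 * δ) := by rw [div_one]
        _ ≤ M ^ (2 * δ) :=
            Real.rpow_le_rpow (norm_nonneg _) hξ (by positivity)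
    have hmem : ξ ∈ Metric.closedBall (0 : EuclideanSpace ℝ (Fin n)) M := by
      simpa [Metric.mem_closedBall, dist_zero_right] using hξ
    rw [hg]
    simp only [Set.indicator_of_mem hmem]
    linarith
  · push_neg at hξ
    have hβne : β ≠ 0 := ne_of_gt hβ0
    have h2 : ‖ξ‖ ^ (2 * δ) ≤ (1 + (Ψ ξ).re) ^ (2 * δ / β) := by
      have he : ‖ξ‖ ^ (2 * δ) = (‖ξ‖ ^ β) ^ (2 * δ / β) := by
        rw [← Real.rpow_mul (norm_nonneg _)]
        congr 1
        field_simp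
      rw [he]
      exact Real.rpow_le_rpow (Real.rpow_nonneg (norm_nonneg _) _)
        (le_trans (hgrowth ξ hξ) (by linarith [hΨre ξ])) (by positivity)
    have h3 : ‖ξ‖ ^ (2 * δ) / (1 + (Ψ ξ).re) ≤ ((1 + (Ψ ξ).re) ^ (1 - η))⁻¹ := by
      have hle : ‖ξ‖ ^ (2 * δ) / (1 + (Ψ ξ).re) ≤ (1 + (Ψ ξ).re) ^ (2 * δ / β - 1) := by
        rw [Real.rpow_sub (h0Ψ ξ), Real.rpow_one]
        exact div_le_div_of_nonneg_right h2 (h0Ψ ξ).le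
      have hexp : 2 * δ / β - 1 ≤ -(1 - η) := by
        have : 2 * δ / β < η := (div_lt_iff₀ hβ0).2 (by linarith)
        linarith
      calc ‖ξ‖ ^ (2 * δ) / (1 + (Ψ ξ).re) ≤ (1 + (Ψ ξ).re) ^ (2 * δ / β - 1) := hle
        _ ≤ (1 + (Ψ ξ).re) ^ (-(1 - η)) :=
            Real.rpow_le_rpow_of_exponent_le (h1Ψ ξ) hexp
        _ = ((1 + (Ψ ξ).re) ^ (1 - η))⁻¹ := Real.rpow_neg (h0Ψ ξ).le _
    have hind : (0:ℝ) ≤ (Metric.closedBall (0 : EuclideanSpace ℝ (Fin n)) M).indicator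
        (fun _ => M ^ (2 * δ)) ξ :=
      Set.indicator_nonneg (fun _ _ => Real.rpow_nonneg hM.le _) ξ
    rw [hg]
    dsimp only
    linarith
end
end

section
/- Let Ψ: ℝⁿ → ℂ be measurable with Re Ψ ≥ 0 and sup_{ξ ∈ ℝⁿ} |Ψ(ξ)| / (1 + ‖ξ‖²) < ∞. Let μ be a nonnegative Borel measure on ℝⁿ that is finite on bounded sets. If ∫_{ℝⁿ} ‖ξ‖^{2δ} μ(dξ) / (1 + Re Ψ(ξ)) < ∞ for some δ ∈ (0,1), then for every γ ∈ (0,δ), ∫_{ℝⁿ} |Ψ(ξ)|^γ μ(dξ) / (1 + Re Ψ(ξ)) < ∞. -/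
open MeasureTheory Complex Set

noncomputable section

theorem stmt17 (n : ℕ) (Ψ : EuclideanSpace ℝ (Fin n) → ℂ) (hΨmeas : Measurable Ψ)
    (hΨre : ∀ ξ, 0 ≤ (Ψ ξ).re)
    (hΨgrowth : ∃ L : ℝ, ∀ ξ, ‖Ψ ξ‖ ≤ L * (1 + ‖ξ‖ ^ 2))
    (μ : Measure (EuclideanSpace ℝ (Fin n)))
    (hμ : ∀ s : Set (EuclideanSpace ℝ (Fin n)), Bornology.IsBounded s → μ s < ⊤)
    (δ : ℝ) (hδ : δ ∈ Set.Ioo (0 : ℝ) 1)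
    (hint : Integrable (fun ξ => ‖ξ‖ ^ (2 * δ) / (1 + (Ψ ξ).re)) μ) :
    ∀ γ : ℝ, γ ∈ Set.Ioo (0 : ℝ) δ →
      Integrable (fun ξ => ‖Ψ ξ‖ ^ γ / (1 + (Ψ ξ).re)) μ := by
  intro γ hγ
  obtain ⟨L, hL⟩ := hΨgrowth
  obtain ⟨hγ0, hγδ⟩ := hγ
  obtain ⟨hδ0, hδ1⟩ := hδ
  have hL0 : 0 ≤ L := by
    have := hL 0
    have h0 : ‖Ψ 0‖ ≤ L := by simpa using this
    exact le_trans (norm_nonneg _) h0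
  set C : ℝ := 2 * L ^ γ with hC
  have hC0 : 0 ≤ C := by positivity
  set g : EuclideanSpace ℝ (Fin n) → ℝ := fun ξ =>
    C * Set.indicator (Metric.closedBall (0 : EuclideanSpace ℝ (Fin n)) 1) (fun _ => (1:ℝ)) ξ
      + C * (‖ξ‖ ^ (2 * δ) / (1 + (Ψ ξ).re)) with hg
  have hgi : Integrable g μ := by
    apply Integrable.add
    · apply Integrable.const_mul
      rw [integrable_indicator_iff measurableSet_closedBall]
      exact integrableOn_const (hμ _ Metric.isBounded_closedBall).ne
    · exact hint.const_mul C
  have hmeas : AEStronglyMeasurable (fun ξ => ‖Ψ ξ‖ ^ γ / (1 + (Ψ ξ).re)) μ := by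
    apply Measurable.aestronglyMeasurable
    have h1 : Measurable fun ξ => ‖Ψ ξ‖ ^ γ :=
      (Real.continuous_rpow_const (le_of_lt hγ0)).measurable.comp hΨmeas.norm
    exact h1.div (measurable_const.add (Complex.measurable_re.comp hΨmeas))
  refine Integrable.mono' hgi hmeas (Filter.Eventually.of_forall fun ξ => ?_)
  have h1re : (1:ℝ) ≤ 1 + (Ψ ξ).re := by linarith [hΨre ξ]
  have h1re0 : (0:ℝ) < 1 + (Ψ ξ).re := by linarith
  have hfnonneg : 0 ≤ ‖Ψ ξ‖ ^ γ / (1 + (Ψ ξ).re) := by positivity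
  rw [Real.norm_of_nonneg hfnonneg]
  have hbase : ‖Ψ ξ‖ ^ γ ≤ (L * (1 + ‖ξ‖ ^ 2)) ^ γ :=
    Real.rpow_le_rpow (norm_nonneg _) (hL ξ) hγ0.le
  have hsq0 : (0:ℝ) ≤ 1 + ‖ξ‖ ^ 2 := by positivity
  have hmul : (L * (1 + ‖ξ‖ ^ 2)) ^ γ = L ^ γ * (1 + ‖ξ‖ ^ 2) ^ γ :=
    Real.mul_rpow hL0 hsq0
  have h2γ : (2:ℝ) ^ γ ≤ 2 := by
    calc (2:ℝ) ^ γ ≤ (2:ℝ) ^ (1:ℝ) :=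
          Real.rpow_le_rpow_of_exponent_le one_le_two (by linarith)
      _ = 2 := Real.rpow_one 2
  by_cases hξ : ‖ξ‖ ≤ 1
  · -- small case
    have hind : Set.indicator (Metric.closedBall (0 : EuclideanSpace ℝ (Fin n)) 1)
        (fun _ => (1:ℝ)) ξ = 1 := by
      rw [Set.indicator_of_mem]
      simpa [Metric.mem_closedBall, dist_eq_norm] using hξ
    have hsq : (1:ℝ) + ‖ξ‖ ^ 2 ≤ 2 := by nlinarith [norm_nonneg ξ]
    have hpow : (1 + ‖ξ‖ ^ 2) ^ γ ≤ 2 := by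
      calc (1 + ‖ξ‖ ^ 2) ^ γ ≤ (2:ℝ) ^ γ := Real.rpow_le_rpow hsq0 hsq hγ0.le
        _ ≤ 2 := h2γ
    have hnum : ‖Ψ ξ‖ ^ γ ≤ C := by
      calc ‖Ψ ξ‖ ^ γ ≤ L ^ γ * (1 + ‖ξ‖ ^ 2) ^ γ := by rw [← hmul]; exact hbase
        _ ≤ L ^ γ * 2 := by
            have : (0:ℝ) ≤ L ^ γ := Real.rpow_nonneg hL0 γ
            nlinarith
        _ = C := by ring
    have h1 : ‖Ψ ξ‖ ^ γ / (1 + (Ψ ξ).re) ≤ C := by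
      rw [div_le_iff₀ h1re0]
      nlinarith
    have h2 : (0:ℝ) ≤ C * (‖ξ‖ ^ (2 * δ) / (1 + (Ψ ξ).re)) := by positivity
    simp only [hg, hind, mul_one]
    linarith
  · push_neg at hξ
    have hξ1 : (1:ℝ) ≤ ‖ξ‖ := hξ.le
    have hsq : (1:ℝ) + ‖ξ‖ ^ 2 ≤ 2 * ‖ξ‖ ^ 2 := by nlinarith
    have hsq2 : (0:ℝ) ≤ 2 * ‖ξ‖ ^ 2 := by positivity
    have hpow : (1 + ‖ξ‖ ^ 2) ^ γ ≤ 2 * ‖ξ‖ ^ (2 * δ) := by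
      calc (1 + ‖ξ‖ ^ 2) ^ γ ≤ (2 * ‖ξ‖ ^ 2) ^ γ := Real.rpow_le_rpow hsq0 hsq hγ0.le
        _ = 2 ^ γ * (‖ξ‖ ^ 2) ^ γ := Real.mul_rpow zero_le_two (by positivity)
        _ ≤ 2 * (‖ξ‖ ^ 2) ^ γ := by
            have : (0:ℝ) ≤ (‖ξ‖ ^ 2) ^ γ := Real.rpow_nonneg (by positivity) γ
            nlinarith
        _ = 2 * ‖ξ‖ ^ (2 * γ) := by
            rw [← Real.rpow_natCast_mul (norm_nonneg ξ) 2 γ]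
            norm_num
        _ ≤ 2 * ‖ξ‖ ^ (2 * δ) := by
            have := Real.rpow_le_rpow_of_exponent_le hξ1 (by linarith : 2 * γ ≤ 2 * δ)
            linarith
    have hnum : ‖Ψ ξ‖ ^ γ ≤ C * ‖ξ‖ ^ (2 * δ) := by
      calc ‖Ψ ξ‖ ^ γ ≤ L ^ γ * (1 + ‖ξ‖ ^ 2) ^ γ := by rw [← hmul]; exact hbase
        _ ≤ L ^ γ * (2 * ‖ξ‖ ^ (2 * δ)) := by
            have : (0:ℝ) ≤ L ^ γ := Real.rpow_nonneg hL0 γ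
            nlinarith
        _ = C * ‖ξ‖ ^ (2 * δ) := by ring
    have h1 : ‖Ψ ξ‖ ^ γ / (1 + (Ψ ξ).re)
        ≤ C * (‖ξ‖ ^ (2 * δ) / (1 + (Ψ ξ).re)) := by
      rw [← mul_div_assoc]
      gcongr
    have h2 : (0:ℝ) ≤ C * Set.indicator (Metric.closedBall (0 : EuclideanSpace ℝ (Fin n)) 1)
        (fun _ => (1:ℝ)) ξ := by
      apply mul_nonneg hC0
      exact Set.indicator_nonneg (fun _ _ => zero_le_one) ξ
    simp only [hg]
    linarith
end
end
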